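/- arXiv:2304.04213 — 3 statements merged into one kernel-verified Lean document; each statement's English description precedes it below -/
import Mathlib

section
/- Let A = A_q ⊗ I_{L-q} be an operator on (C²)^{⊗L} acting nontrivially only on the first q sites, with operator norm ‖A‖ ≤ C. Then for any j = 1,...,L-1, the trace satisfies |tr(T^{-j} A)| ≤ C · 2^{max{q, gcd(j,L)}}, where T is the cyclic shift. -/
open scoped Matrix

open Fin.NatCast Fin.CommRing

/-- The cyclic shift map (sending the basis string `σ` to `x ↦ σ(x+1)`) on binary
strings indexing the product basis of `(ℂ²)^{⊗L}`. -/
def shiftMap (L : ℕ) : (Fin L → Bool) → (Fin L → Bool) :=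
  fun σ i => σ (finRotate L i)

/-- The cyclic shift unitary `T` on `(ℂ²)^{⊗L}`, represented as a permutation
matrix in the product basis indexed by binary strings. -/
def shiftOp (L : ℕ) : Matrix (Fin L → Bool) (Fin L → Bool) ℂ :=
  Matrix.of fun σ τ => if τ = shiftMap L σ then 1 else 0

/-- The momentum projection `Π_k = (1/L) Σ_{j=0}^{L-1} e^{2πi kj/L} T^{-j}`
(where `T^{-j} = T^{L-j}` since `T^L = 1`). -/
noncomputable def momentumProj (L k : ℕ) : Matrix (Fin L → Bool) (Fin L → Bool) ℂ :=
  (L : ℂ)⁻¹ • ∑ j ∈ Finset.range L,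
    Complex.exp (2 * Real.pi * Complex.I * k * j / L) • (shiftOp L) ^ (L - j)

/-- A binary string is aperiodic if no nontrivial cyclic shift fixes it. -/
def Aperiodic (L : ℕ) (σ : Fin L → Bool) : Prop :=
  ∀ j : ℕ, 0 < j → j < L → (shiftMap L)^[j] σ ≠ σ


/-- The `q`-local operator `A = A_q ⊗ I_{L-q}` on `(ℂ²)^{⊗L}` acting nontrivially
only on the first `q` sites. -/
def localOp (L q : ℕ) (h : q ≤ L) (Aq : Matrix (Fin q → Bool) (Fin q → Bool) ℂ) :
    Matrix (Fin L → Bool) (Fin L → Bool) ℂ :=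
  Matrix.of fun σ τ =>
    (if ∀ i : Fin L, q ≤ (i : ℕ) → σ i = τ i then 1 else 0) *
      Aq (σ ∘ Fin.castLE h) (τ ∘ Fin.castLE h)

/- ### Auxiliary lemmas -/

lemma shiftMap_iterate (n k : ℕ) (σ : Fin (n+1) → Bool) (i : Fin (n+1)) :
    (shiftMap (n+1))^[k] σ i = σ (i + (k : Fin (n+1))) := by
  induction k generalizing i with
  | zero => simp
  | succ k ih =>
    rw [Function.iterate_succ_apply']
    show ((shiftMap (n+1))^[k] σ) (finRotate (n+1) i) = _
    rw [finRotate_succ_apply, ih]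
    congr 1
    push_cast
    ring

lemma shiftOp_pow (L n : ℕ) (σ τ : Fin L → Bool) :
    ((shiftOp L) ^ n) σ τ = if τ = (shiftMap L)^[n] σ then 1 else 0 := by
  induction n generalizing τ with
  | zero => simp [Matrix.one_apply, eq_comm]
  | succ n ih =>
    rw [pow_succ, Matrix.mul_apply]
    simp only [ih]
    simp only [shiftOp, Matrix.of_apply, Function.iterate_succ_apply']
    simp only [ite_mul, one_mul, zero_mul]
    rw [Finset.sum_eq_single ((shiftMap L)^[n] σ)]
    · simp
    · intro b _ hb; simp [hb]
    · simp

lemma trace_shift_mul (L n : ℕ) (B : Matrix (Fin L → Bool) (Fin L → Bool) ℂ) :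
    ((shiftOp L) ^ n * B).trace = ∑ σ : Fin L → Bool, B ((shiftMap L)^[n] σ) σ := by
  simp [Matrix.trace, Matrix.diag, Matrix.mul_apply, shiftOp_pow, ite_mul]

lemma exists_reach (L m : ℕ) (hL : 0 < L) (i : ℕ) :
    ∃ k : ℕ, (i + k * m) % L = i % Nat.gcd m L := by
  set g := Nat.gcd m L with hg
  have hg0 : 0 < g := Nat.gcd_pos_of_pos_right m hL
  have hgL : g ≤ L := Nat.le_of_dvd hL (Nat.gcd_dvd_right m L)
  set u := Nat.gcdA m L with hu
  set v := Nat.gcdB m L with hv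
  have hbez : (g : ℤ) = m * u + L * v := Nat.gcd_eq_gcd_ab m L
  set d : ℕ := i / g with hd
  set r : ℕ := i % g with hr
  have hdm : (g : ℤ) * d + (r : ℤ) = i := by exact_mod_cast Nat.div_add_mod i g
  refine ⟨((-u * d) % L).toNat, ?_⟩
  set k : ℕ := ((-u * d) % L).toNat with hk
  have hLne : (L : ℤ) ≠ 0 := by exact_mod_cast hL.ne'
  have hknn : (0:ℤ) ≤ (-u * d) % L := Int.emod_nonneg _ hLne
  have hkval : (k : ℤ) = -u * d - L * ((-u * d) / L) := by
    rw [hk, Int.toNat_of_nonneg hknn, Int.emod_def]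
  have hdvd : (L : ℤ) ∣ ((i + k * m : ℕ) : ℤ) - (r : ℤ) := by
    refine ⟨d * v - ((-u * d) / L) * m, ?_⟩
    push_cast
    linear_combination ((d:ℤ)) * hbez + (m:ℤ) * hkval - hdm
  have hmodeq : ((i + k * m : ℕ) : ℤ) ≡ (r : ℤ) [ZMOD L] :=
    Int.ModEq.symm (Int.modEq_iff_dvd.mpr hdvd)
  have : ((i + k * m) % L : ℕ) = (r % L : ℕ) := by
    have h2 := hmodeq
    unfold Int.ModEq at h2
    exact_mod_cast h2
  rw [this, hr, Nat.mod_eq_of_lt (lt_of_lt_of_le (Nat.mod_lt i hg0) hgL)]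

lemma fin_val_add_natCast (n : ℕ) (i : Fin (n+1)) (a : ℕ) :
    ((i + (a : Fin (n+1))) : Fin (n+1)).val = ((i : ℕ) + a) % (n+1) := by
  rw [Fin.val_add, Fin.val_natCast, Nat.add_mod_mod]

lemma chain (n q m : ℕ) (σ : Fin (n+1) → Bool)
    (hσ : ∀ i : Fin (n+1), q ≤ (i : ℕ) → σ (i + (m : Fin (n+1))) = σ i)
    (i : Fin (n+1)) (k : ℕ) (hk : ∀ t < k, q ≤ ((i : ℕ) + t * m) % (n+1)) :
    σ (i + ((k * m : ℕ) : Fin (n+1))) = σ i := by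
  induction k with
  | zero => simp
  | succ k ih =>
    have e1 : (((k+1) * m : ℕ) : Fin (n+1)) = ((k * m : ℕ) : Fin (n+1)) + (m : Fin (n+1)) := by
      push_cast; ring
    rw [e1, ← add_assoc]
    have hv := fin_val_add_natCast n i (k * m)
    rw [hσ (i + ((k * m : ℕ) : Fin (n+1))) (by rw [hv]; exact hk k (Nat.lt_succ_self k))]
    exact ih (fun t ht => hk t (Nat.lt_succ_of_lt ht))

lemma constraint_ext (n q m M : ℕ) (hqM : q ≤ M) (hgM : Nat.gcd m (n+1) ≤ M)
    (σ τ : Fin (n+1) → Bool)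
    (hσ : ∀ i : Fin (n+1), q ≤ (i : ℕ) → σ (i + (m : Fin (n+1))) = σ i)
    (hτ : ∀ i : Fin (n+1), q ≤ (i : ℕ) → τ (i + (m : Fin (n+1))) = τ i)
    (hagree : ∀ x : Fin (n+1), (x : ℕ) < M → σ x = τ x) : σ = τ := by
  classical
  funext i
  have hL : 0 < n + 1 := Nat.succ_pos n
  have hex : ∃ k, ((i : ℕ) + k * m) % (n+1) < M := by
    obtain ⟨k, hk⟩ := exists_reach (n+1) m hL i
    exact ⟨k, hk ▸ lt_of_lt_of_le (Nat.mod_lt _ (Nat.gcd_pos_of_pos_right m hL)) hgM⟩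
  set k₀ := Nat.find hex with hk₀
  have h1 : ((i : ℕ) + k₀ * m) % (n+1) < M := Nat.find_spec hex
  have h2 : ∀ t < k₀, q ≤ ((i : ℕ) + t * m) % (n+1) :=
    fun t ht => le_trans hqM (le_of_not_gt (Nat.find_min hex ht))
  have hxσ := chain n q m σ hσ i k₀ h2
  have hxτ := chain n q m τ hτ i k₀ h2
  rw [← hxσ, ← hxτ]
  exact hagree _ (by rw [fin_val_add_natCast n i (k₀ * m)]; exact h1)

set_option synthInstance.maxHeartbeats 1000000 in
lemma entry_le_opNorm {N : Type*} [Fintype N] [DecidableEq N] (A : Matrix N N ℂ) (a b : N) :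
    ‖A a b‖ ≤ ‖Matrix.toEuclideanCLM (𝕜 := ℂ) A‖ := by
  set y : EuclideanSpace ℂ N := Matrix.toEuclideanCLM (𝕜 := ℂ) A (EuclideanSpace.single b 1) with hy
  have hya : y a = A a b := by
    rw [hy, Matrix.ofLp_toEuclideanCLM]
    show Matrix.toLin' A (Pi.single b 1) a = A a b
    rw [Matrix.toLin'_apply]
    simp [Matrix.mulVec_single]
  have h1 : ‖y a‖ ≤ ‖y‖ := by
    rw [EuclideanSpace.norm_eq]
    have h2 : ‖y a‖ ^ 2 ≤ ∑ i, ‖y i‖ ^ 2 :=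
      Finset.single_le_sum (f := fun i => ‖y i‖ ^ 2) (fun i _ => sq_nonneg _)
        (Finset.mem_univ a)
    calc ‖y a‖ = Real.sqrt (‖y a‖ ^ 2) := (Real.sqrt_sq (norm_nonneg _)).symm
      _ ≤ _ := Real.sqrt_le_sqrt h2
  have h3 : ‖y‖ ≤ ‖Matrix.toEuclideanCLM (𝕜 := ℂ) A‖ := by
    calc ‖y‖ ≤ ‖Matrix.toEuclideanCLM (𝕜 := ℂ) A‖ * ‖EuclideanSpace.single b (1:ℂ)‖ :=
          ContinuousLinearMap.le_opNorm _ _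
      _ = ‖Matrix.toEuclideanCLM (𝕜 := ℂ) A‖ := by simp [EuclideanSpace.norm_single]
  rw [← hya]
  exact h1.trans h3

/-- If `A = A_q ⊗ I_{L-q}` has operator norm at most `C`, then for any
`j = 1,…,L-1` we have `|tr(T^{-j} A)| ≤ C · 2^{max{q, gcd(j,L)}}`. -/
theorem trace_shift_local_bound (L q : ℕ) (h : q ≤ L)
    (Aq : Matrix (Fin q → Bool) (Fin q → Bool) ℂ) (C : ℝ)
    (hnorm : ‖Matrix.toEuclideanCLM (𝕜 := ℂ) (localOp L q h Aq)‖ ≤ C)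
    (j : ℕ) (hj : 1 ≤ j) (hjL : j ≤ L - 1) :
    ‖((shiftOp L) ^ (L - j) * localOp L q h Aq).trace‖ ≤
      C * 2 ^ max q (Nat.gcd j L) := by
  classical
  have hL2 : 2 ≤ L := by omega
  obtain ⟨n, rfl⟩ : ∃ n, L = n + 1 := ⟨L - 1, by omega⟩
  set m : ℕ := n + 1 - j with hm
  have hm1 : 1 ≤ m := by omega
  have hjL' : j ≤ n + 1 := by omega
  have hgcd : Nat.gcd m (n+1) = Nat.gcd j (n+1) := by
    have e1 : Nat.gcd m j = Nat.gcd m (n+1) := by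
      have := Nat.gcd_sub_self_right (m := m) (n := n+1) (by omega)
      rwa [show n + 1 - m = j by omega] at this
    have e2 : Nat.gcd m j = Nat.gcd (n+1) j := Nat.gcd_sub_self_left hjL'
    rw [← e1, e2, Nat.gcd_comm]
  set M : ℕ := max q (Nat.gcd j (n+1)) with hM
  have hqM : q ≤ M := le_max_left _ _
  have hgM : Nat.gcd m (n+1) ≤ M := by rw [hgcd]; exact le_max_right _ _
  have hML : M ≤ n + 1 := by
    have hg1 : Nat.gcd j (n+1) ≤ n + 1 :=
      Nat.le_of_dvd (Nat.succ_pos n) (Nat.gcd_dvd_right j (n+1))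
    exact max_le h hg1
  have hCnn : 0 ≤ C := le_trans (norm_nonneg _) hnorm
  -- entrywise bound on Aq
  have hAqC : ∀ a b, ‖Aq a b‖ ≤ C := by
    intro a b
    refine le_trans ?_ hnorm
    set σ0 : Fin (n+1) → Bool := fun i => if hi : (i : ℕ) < q then a ⟨i, hi⟩ else false with hσ0
    set τ0 : Fin (n+1) → Bool := fun i => if hi : (i : ℕ) < q then b ⟨i, hi⟩ else false with hτ0
    have h1 : localOp (n+1) q h Aq σ0 τ0 = Aq a b := by
      simp only [localOp, Matrix.of_apply]
      rw [if_pos, one_mul]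
      · congr 1 <;> funext x <;> simp [hσ0, hτ0, Fin.castLE]
      · intro i hi
        simp [hσ0, hτ0, Nat.not_lt.mpr hi]
    rw [← h1]
    exact entry_le_opNorm _ _ _
  rw [trace_shift_mul]
  refine le_trans (norm_sum_le _ _) ?_
  simp only [localOp, Matrix.of_apply]
  set p : (Fin (n+1) → Bool) → Prop :=
    fun σ => ∀ i : Fin (n+1), q ≤ (i : ℕ) → σ (i + (m : Fin (n+1))) = σ i with hp
  refine le_trans (Finset.sum_le_sum
      (g := fun σ => if p σ then C else 0) ?_) ?_
  · intro σ _
    by_cases hc : p σ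
    · rw [if_pos hc, if_pos (fun i hi => by rw [shiftMap_iterate]; exact hc i hi), one_mul]
      exact hAqC _ _
    · rw [if_neg hc, if_neg, zero_mul, norm_zero]
      intro hcon
      exact hc (fun i hi => by rw [← shiftMap_iterate n m σ i]; exact hcon i hi)
  · rw [← Finset.sum_filter, Finset.sum_const, nsmul_eq_mul]
    have hcard : (Finset.univ.filter p).card ≤ 2 ^ M := by
      have hinj : Set.InjOn (fun (σ : Fin (n+1) → Bool) (x : Fin M) => σ (Fin.castLE hML x))
          (Finset.univ.filter p) := by
        intro σ hσ τ hτ hst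
        have hσ' : p σ := (Finset.mem_filter.mp hσ).2
        have hτ' : p τ := (Finset.mem_filter.mp hτ).2
        refine constraint_ext n q m M hqM hgM σ τ hσ' hτ' ?_
        intro x hx
        have := congrFun hst ⟨(x : ℕ), hx⟩
        simpa [Fin.castLE] using this
      calc (Finset.univ.filter p).card
          ≤ (Finset.univ : Finset (Fin M → Bool)).card :=
            Finset.card_le_card_of_injOn _ (fun _ _ => Finset.mem_univ _) hinj
        _ = 2 ^ M := by simp [Finset.card_univ]
    calc ((Finset.univ.filter p).card : ℝ) * C ≤ (2 ^ M : ℕ) * C := by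
          exact mul_le_mul_of_nonneg_right (by exact_mod_cast hcard) hCnn
      _ = C * 2 ^ M := by push_cast; ring
end

section
/- Let A = A_q ⊗ I_{L-q} be a q-local observable on (C²)^{⊗L} with ‖A‖ ≤ 1, and let Å = A − ⟨A⟩·I be its traceless part, where ⟨A⟩ = tr(A)/2^L. Then for every momentum k, | tr(Π_k A Π_k)/tr Π_k − ⟨A⟩ | = O( L / 2^{min{L-q, L/2}} ). -/
open scoped Matrix

lemma entry_abs_le {n : Type*} [Fintype n] [DecidableEq n] (M : Matrix n n ℂ) (σ τ : n) :
    ‖M σ τ‖ ≤ ‖Matrix.toEuclideanCLM (𝕜 := ℂ) M‖ := by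
  set f := Matrix.toEuclideanCLM (𝕜 := ℂ) M with hf
  set x := EuclideanSpace.single (𝕜 := ℂ) σ (1:ℂ) with hx
  set y := EuclideanSpace.single (𝕜 := ℂ) τ (1:ℂ) with hy
  have h1 : M σ τ = inner (𝕜 := ℂ) x (f y) := by
    have h2 : f y = (WithLp.equiv 2 _).symm (Matrix.toLin' M (Pi.single τ 1)) := by
      rw [hy]
      exact Matrix.toEuclideanCLM_toLp M _
    rw [h2, hx, EuclideanSpace.inner_single_left]
    simp [Matrix.mulVec_single]
  have h3 : ‖inner (𝕜 := ℂ) x (f y)‖ ≤ ‖x‖ * ‖f y‖ := norm_inner_le_norm _ _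
  have h4 : ‖f y‖ ≤ ‖f‖ * ‖y‖ := f.le_opNorm _
  have hx1 : ‖x‖ = 1 := by simp [hx]
  have hy1 : ‖y‖ = 1 := by simp [hy]
  have : ‖M σ τ‖ = ‖inner (𝕜 := ℂ) x (f y)‖ := by rw [h1]
  rw [this]
  nlinarith [norm_nonneg (f y), norm_nonneg f]
open Fin.NatCast Fin.CommRing

lemma shift_iter (N n : ℕ) (σ : Fin (N+1) → Bool) (i : Fin (N+1)) :
    (shiftMap (N+1))^[n] σ i = σ (i + (n : Fin (N+1))) := by
  induction n generalizing σ i with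
  | zero => simp
  | succ n ih =>
    rw [Function.iterate_succ_apply, ih]
    show σ (finRotate (N+1) (i + (n : Fin (N+1)))) = _
    rw [finRotate_succ_apply]
    congr 1
    push_cast
    ring
lemma shiftOp_pow_s13 (N m : ℕ) :
    (shiftOp (N+1))^m = Matrix.of fun σ τ =>
      if τ = (shiftMap (N+1))^[m] σ then 1 else 0 := by
  induction m with
  | zero =>
    ext σ τ
    simp [Matrix.one_apply, eq_comm]
  | succ m ih =>
    rw [pow_succ', ih]
    ext σ τ
    simp only [Matrix.mul_apply, Matrix.of_apply, shiftOp]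
    rw [Finset.sum_eq_single (shiftMap (N+1) σ)]
    · simp [Function.iterate_succ_apply]
      congr
    · intro b _ hb
      simp [hb]
    · simp
lemma exists_step (m L x : ℕ) (hL : 0 < L) (hm : 0 < m) :
    ∃ n : ℕ, (x + n * m) % L = x % Nat.gcd m L := by
  set d := Nat.gcd m L with hd
  have hd0 : 0 < d := Nat.gcd_pos_of_pos_left _ hm
  have hdL : d ∣ L := Nat.gcd_dvd_right m L
  have hdLe : d ≤ L := Nat.le_of_dvd hL hdL
  obtain ⟨b, hb⟩ : ∃ b : ℤ, (d : ℤ) - (m : ℤ) * Nat.gcdA m L = (L : ℤ) * b := by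
    refine ⟨Nat.gcdB m L, ?_⟩
    have := Nat.gcd_eq_gcd_ab m L
    rw [← hd] at this
    linarith [this]
  set a : ℤ := Nat.gcdA m L with ha
  set t : ℤ := ((x / d : ℕ) : ℤ) with ht
  set z : ℤ := (-t * a) % L with hz
  have hz0 : 0 ≤ z := Int.emod_nonneg _ (by exact_mod_cast hL.ne')
  refine ⟨z.toNat, ?_⟩
  have hzn : (z.toNat : ℤ) = z := Int.toNat_of_nonneg hz0
  -- x + n*m ≡ x % d  (mod L)
  have key : (L : ℤ) ∣ ((x : ℤ) + z.toNat * m) - (x % d : ℕ) := by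
    obtain ⟨s, hs⟩ : ∃ s : ℤ, z = -t * a + L * s := by
      refine ⟨-((-t * a) / L), ?_⟩
      rw [hz]
      rw [Int.emod_def]
      ring
    have hxd : (x : ℤ) - (x % d : ℕ) = d * t := by
      have := Nat.div_add_mod x d
      push_cast [ht]
      push_cast at this
      linarith
    have : ((x : ℤ) + z.toNat * m) - (x % d : ℕ) = d * t + z * m := by
      rw [hzn]; linarith [hxd]
    rw [this, hs]
    have : (d : ℤ) * t + (-t * a + L * s) * m = t * ((d : ℤ) - m * a) + L * (s * m) := by ring
    rw [this, hb]
    exact ⟨t * b + s * m, by ring⟩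
  have hmod : (x + z.toNat * m) % L = (x % d) % L := by
    have : (x % d) ≡ (x + z.toNat * m) [MOD L] := by
      rw [Nat.modEq_iff_dvd]
      push_cast
      convert key using 1
      push_cast
      rfl
    exact this.symm
  rw [hmod, Nat.mod_eq_of_lt (lt_of_lt_of_le (Nat.mod_lt _ hd0) hdLe)]
lemma card_constraint_le (N q m : ℕ) (hq : q ≤ N + 1) (hm1 : 1 ≤ m) (hm2 : m ≤ N) :
    (Finset.univ.filter (fun σ : Fin (N+1) → Bool =>
        ∀ i : Fin (N+1), q ≤ (i : ℕ) → σ (i + (m : Fin (N+1))) = σ i)).card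
      ≤ 2 ^ (max q (Nat.gcd m (N+1))) := by
  set L := N + 1 with hLdef
  set d := Nat.gcd m (L) with hd
  set M := max q d with hMdef
  have hL0 : 0 < L := Nat.succ_pos N
  have hdL : d ∣ L := Nat.gcd_dvd_right m L
  have hdle : d ≤ m := Nat.le_of_dvd hm1 (Nat.gcd_dvd_left m L)
  have hML : M ≤ L := max_le hq (le_trans hdle (by omega))
  have hd0 : 0 < d := Nat.gcd_pos_of_pos_left _ hm1
  -- value of x + n*m in Fin L
  have val_add : ∀ (x : Fin L) (n : ℕ),
      (x + ((n * m : ℕ) : Fin L)).val = (x.val + n * m) % L := by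
    intro x n
    rw [Fin.add_def]
    simp only [Fin.val_natCast]
    rw [Nat.add_mod x.val (n*m) L, Nat.mod_eq_of_lt x.isLt]
  -- propagation along the orbit
  have prop : ∀ (σ : Fin L → Bool),
      (∀ i : Fin L, q ≤ (i : Fin L).val → σ (i + (m : Fin L)) = σ i) →
      ∀ (x : Fin L) (n : ℕ),
      (∀ i, i < n → ¬ (x + ((i * m : ℕ) : Fin L)).val < M) →
      σ (x + ((n * m : ℕ) : Fin L)) = σ x := by
    intro σ hσ x n
    induction n with
    | zero => intro _; norm_num
    | succ n ih =>
      intro hlow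
      have hge : M ≤ (x + ((n * m : ℕ) : Fin L)).val :=
        le_of_not_gt (hlow n (Nat.lt_succ_self n))
      have hq' : q ≤ (x + ((n * m : ℕ) : Fin L)).val :=
        le_trans (le_max_left _ _) hge
      have step := hσ (x + ((n * m : ℕ) : Fin L)) hq'
      have harith : x + (((n+1) * m : ℕ) : Fin L)
          = (x + ((n * m : ℕ) : Fin L)) + (m : Fin L) := by
        have : (((n+1) * m : ℕ) : Fin L) = ((n * m : ℕ) : Fin L) + (m : Fin L) := by
          push_cast
          rw [add_mul, one_mul]
          exact Nat.cast_add (R := Fin L) _ _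
        rw [this, add_assoc]
      rw [harith, step]
      exact ih (fun i hi => hlow i (Nat.lt_succ_of_lt hi))
  -- existence of an orbit point below M
  have exmain : ∀ x : Fin L, ∃ n : ℕ, (x + ((n * m : ℕ) : Fin L)).val < M := by
    intro x
    obtain ⟨n, hn⟩ := exists_step m L x.val hL0 hm1
    refine ⟨n, ?_⟩
    rw [val_add, hn]
    calc x.val % d < d := Nat.mod_lt _ hd0
      _ ≤ M := le_max_right _ _
  -- the injection into strings of length M
  classical
  have hinj : Set.InjOn (fun (σ : Fin L → Bool) (i : Fin M) => σ (Fin.castLE hML i))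
      ((Finset.univ.filter (fun σ : Fin L → Bool =>
        ∀ i : Fin L, q ≤ (i : Fin L).val → σ (i + (m : Fin L)) = σ i)) : Finset (Fin L → Bool)) := by
    intro σ hσ σ' hσ' hagree
    simp only [Finset.coe_filter, Set.mem_setOf_eq, Finset.mem_univ, true_and] at hσ hσ'
    funext x
    obtain ⟨n, hn⟩ := exmain x
    have hmin := Nat.find_spec (exmain x)
    have hlow : ∀ i, i < Nat.find (exmain x) → ¬ (x + ((i * m : ℕ) : Fin L)).val < M :=
      fun i hi => Nat.find_min (exmain x) hi
    set y := x + ((Nat.find (exmain x) * m : ℕ) : Fin L) with hy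
    have h1 : σ y = σ x := prop σ hσ x _ hlow
    have h2 : σ' y = σ' x := prop σ' hσ' x _ hlow
    have hyM : (y : ℕ) < M := hmin
    have : σ y = σ' y := by
      have := congrFun hagree ⟨(y : ℕ), hyM⟩
      simpa [Fin.castLE, Fin.ext_iff] using this
    rw [← h1, ← h2, this]
  calc (Finset.univ.filter (fun σ : Fin L → Bool =>
        ∀ i : Fin L, q ≤ (i : Fin L).val → σ (i + (m : Fin L)) = σ i)).card
      ≤ (Finset.univ : Finset (Fin M → Bool)).card :=
        Finset.card_le_card_of_injOn _ (fun _ _ => Finset.mem_univ _) hinj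
    _ = 2 ^ M := by simp
noncomputable def cval (N k : ℕ) : ℂ := Complex.exp (2 * Real.pi * Complex.I * k / (N+1))
lemma exp_eq_pow (N k : ℕ) (j : ℕ) :
    Complex.exp (2 * Real.pi * Complex.I * k * j / (N+1)) = (cval N k) ^ j := by
  rw [cval, ← Complex.exp_nat_mul]
  congr 1
  have hne : ((N : ℂ) + 1) ≠ 0 := Nat.cast_add_one_ne_zero N
  field_simp
lemma cval_pow_L (N k : ℕ) : (cval N k) ^ (N + 1) = 1 := by
  rw [cval, ← Complex.exp_nat_mul]
  have hne : ((N : ℂ) + 1) ≠ 0 := Nat.cast_add_one_ne_zero N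
  have : ((N:ℂ)+1) * (2 * Real.pi * Complex.I * k / ((N:ℂ)+1)) = (k : ℂ) * (2 * Real.pi * Complex.I) := by
    field_simp
  rw [show ((N+1 : ℕ) : ℂ) = (N:ℂ)+1 by push_cast; ring, this]
  rw [show ((k:ℂ) * (2 * (Real.pi:ℂ) * Complex.I)) = ((k:ℤ):ℂ) * (2 * (Real.pi:ℝ) * Complex.I) by push_cast; ring]
  exact Complex.exp_int_mul_two_pi_mul_I k
lemma shiftMap_iterate_L (N : ℕ) : (shiftMap (N+1))^[N+1] = id := by
  funext σ i
  rw [shift_iter]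
  simp
lemma shiftOp_pow_full (N : ℕ) : (shiftOp (N+1))^(N+1) = 1 := by
  rw [shiftOp_pow_s13, shiftMap_iterate_L]
  ext σ τ
  simp [Matrix.one_apply, eq_comm]
lemma momentumProj_eq (N k : ℕ) :
    momentumProj (N+1) k = ((N+1 : ℕ) : ℂ)⁻¹ • ∑ j ∈ Finset.range (N+1),
      (cval N k) ^ j • (shiftOp (N+1)) ^ (N+1-j) := by
  rw [momentumProj]
  congr 1
  refine Finset.sum_congr rfl fun j _ => ?_
  rw [← exp_eq_pow]
  congr 2
  push_cast
  ring
lemma T_mul_proj (N k : ℕ) :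
    shiftOp (N+1) * momentumProj (N+1) k = (cval N k) • momentumProj (N+1) k := by
  set c := cval N k with hc
  set T := shiftOp (N+1) with hT
  have hTL : T^(N+1) = 1 := shiftOp_pow_full N
  set G : ℕ → Matrix (Fin (N+1) → Bool) (Fin (N+1) → Bool) ℂ :=
    fun i => c^i • T^((N+2)-i) with hG
  have hG0L : G 0 = G (N+1) := by
    rw [hG]
    simp only [pow_zero, one_smul, Nat.sub_zero, Nat.add_sub_cancel_left]
    rw [show N+2 = (N+1)+1 by ring, pow_succ, hTL, cval_pow_L N k]
    simp
  have hsum : ∑ j ∈ Finset.range (N+1), G (j+1) = ∑ j ∈ Finset.range (N+1), G j := by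
    have h1 := Finset.sum_range_succ G (N+1)
    have h2 := Finset.sum_range_succ' G (N+1)
    rw [h1, hG0L] at h2
    exact (add_right_cancel h2).symm
  rw [momentumProj_eq, Matrix.mul_smul, Finset.mul_sum, smul_comm]
  congr 1
  rw [Finset.smul_sum]
  calc ∑ j ∈ Finset.range (N+1), T * (c^j • T^(N+1-j))
      = ∑ j ∈ Finset.range (N+1), G j := by
        refine Finset.sum_congr rfl fun j hj => ?_
        rw [Finset.mem_range] at hj
        rw [mul_smul_comm, hG, ← pow_succ']
        congr 2
        omega
    _ = ∑ j ∈ Finset.range (N+1), G (j+1) := hsum.symm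
    _ = ∑ j ∈ Finset.range (N+1), c • (c^j • T^(N+1-j)) := by
        refine Finset.sum_congr rfl fun j hj => ?_
        rw [Finset.mem_range] at hj
        have h2 : N + 2 - (j+1) = N + 1 - j := by omega
        rw [hG]
        simp only [h2]
        rw [smul_smul, ← pow_succ']
lemma Tpow_mul_proj (N k m : ℕ) :
    (shiftOp (N+1))^m * momentumProj (N+1) k = (cval N k)^m • momentumProj (N+1) k := by
  induction m with
  | zero => simp
  | succ m ih =>
    rw [pow_succ', mul_assoc, ih, Matrix.mul_smul, T_mul_proj, smul_smul, ← pow_succ]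
lemma proj_idem (N k : ℕ) :
    momentumProj (N+1) k * momentumProj (N+1) k = momentumProj (N+1) k := by
  nth_rewrite 1 [momentumProj_eq]
  rw [Matrix.smul_mul, Finset.sum_mul]
  have : ∀ j ∈ Finset.range (N+1),
      ((cval N k)^j • (shiftOp (N+1))^(N+1-j)) * momentumProj (N+1) k
        = momentumProj (N+1) k := by
    intro j hj
    rw [Finset.mem_range] at hj
    rw [Matrix.smul_mul, Tpow_mul_proj, smul_smul, ← pow_add]
    rw [show j + (N+1-j) = N+1 by omega, cval_pow_L, one_smul]
  rw [Finset.sum_congr rfl this, Finset.sum_const, Finset.card_range,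
    ← Nat.cast_smul_eq_nsmul ℂ, smul_smul,
    inv_mul_cancel₀ (by exact_mod_cast Nat.succ_ne_zero N), one_smul]
lemma trace_pow_mul (N m : ℕ) (A : Matrix (Fin (N+1) → Bool) (Fin (N+1) → Bool) ℂ) :
    ((shiftOp (N+1))^m * A).trace = ∑ σ : Fin (N+1) → Bool, A ((shiftMap (N+1))^[m] σ) σ := by
  rw [shiftOp_pow_s13, Matrix.trace]
  refine Finset.sum_congr rfl fun σ _ => ?_
  simp only [Matrix.diag_apply, Matrix.mul_apply, Matrix.of_apply]
  rw [Finset.sum_eq_single ((shiftMap (N+1))^[m] σ)]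
  · simp
  · intro b _ hb
    simp [hb]
  · simp
lemma trace_proj_mul (N k : ℕ) (A : Matrix (Fin (N+1) → Bool) (Fin (N+1) → Bool) ℂ) :
    (momentumProj (N+1) k * A).trace = ((N+1 : ℕ) : ℂ)⁻¹ * ∑ j ∈ Finset.range (N+1),
      (cval N k)^j * ((shiftOp (N+1))^(N+1-j) * A).trace := by
  rw [momentumProj_eq, Matrix.smul_mul, Matrix.trace_smul, smul_eq_mul, Finset.sum_mul]
  congr 1
  rw [Matrix.trace_sum]
  refine Finset.sum_congr rfl fun j _ => ?_
  rw [Matrix.smul_mul, Matrix.trace_smul, smul_eq_mul]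
lemma trace_PAP (N k : ℕ) (A : Matrix (Fin (N+1) → Bool) (Fin (N+1) → Bool) ℂ) :
    (momentumProj (N+1) k * A * momentumProj (N+1) k).trace
      = (momentumProj (N+1) k * A).trace := by
  rw [Matrix.trace_mul_comm, ← mul_assoc, proj_idem]
lemma abs_trace_le (N q m : ℕ) (hq : q ≤ N + 1) (hm1 : 1 ≤ m) (hm2 : m ≤ N)
    (A : Matrix (Fin (N+1) → Bool) (Fin (N+1) → Bool) ℂ)
    (hent : ∀ σ τ, ‖A σ τ‖ ≤ 1)
    (hzero : ∀ σ : Fin (N+1) → Bool,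
      ¬ (∀ i : Fin (N+1), q ≤ (i : ℕ) → σ (i + (m : Fin (N+1))) = σ i) →
      A ((shiftMap (N+1))^[m] σ) σ = 0) :
    ‖((shiftOp (N+1))^m * A).trace‖ ≤ 2 ^ (max q (Nat.gcd m (N+1))) := by
  classical
  rw [trace_pow_mul]
  calc ‖∑ σ : Fin (N+1) → Bool, A ((shiftMap (N+1))^[m] σ) σ‖
      ≤ ∑ σ : Fin (N+1) → Bool, ‖A ((shiftMap (N+1))^[m] σ) σ‖ :=
        norm_sum_le _ _
    _ ≤ ∑ σ : Fin (N+1) → Bool,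
        (if (∀ i : Fin (N+1), q ≤ (i : ℕ) → σ (i + (m : Fin (N+1))) = σ i) then (1:ℝ) else 0) := by
        refine Finset.sum_le_sum fun σ _ => ?_
        by_cases hσ : ∀ i : Fin (N+1), q ≤ (i : ℕ) → σ (i + (m : Fin (N+1))) = σ i
        · rw [if_pos hσ]; exact hent _ _
        · rw [if_neg hσ, hzero σ hσ]; simp
    _ = ((Finset.univ.filter (fun σ : Fin (N+1) → Bool =>
          ∀ i : Fin (N+1), q ≤ (i : ℕ) → σ (i + (m : Fin (N+1))) = σ i)).card : ℝ) := by
        rw [Finset.sum_boole]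
    _ ≤ 2 ^ (max q (Nat.gcd m (N+1))) := by
        exact_mod_cast Nat.cast_le.mpr (card_constraint_le N q m hq hm1 hm2)
lemma abs_trace_localOp_le (N q m : ℕ) (h : q ≤ N + 1) (hm1 : 1 ≤ m) (hm2 : m ≤ N)
    (Aq : Matrix (Fin q → Bool) (Fin q → Bool) ℂ)
    (hent : ∀ σ τ, ‖(localOp (N+1) q h Aq) σ τ‖ ≤ 1) :
    ‖((shiftOp (N+1))^m * localOp (N+1) q h Aq).trace‖
      ≤ 2 ^ (max q (Nat.gcd m (N+1))) := by
  refine abs_trace_le N q m h hm1 hm2 _ hent fun σ hσ => ?_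
  show (if ∀ i : Fin (N+1), q ≤ (i : ℕ) → ((shiftMap (N+1))^[m] σ) i = σ i then (1:ℂ) else 0) * _ = 0
  rw [if_neg, zero_mul]
  intro hcon
  exact hσ fun i hi => by rw [← shift_iter N m σ i]; exact hcon i hi
lemma abs_trace_one_le (N m : ℕ) (hm1 : 1 ≤ m) (hm2 : m ≤ N) :
    ‖((shiftOp (N+1))^m * (1 : Matrix (Fin (N+1) → Bool) (Fin (N+1) → Bool) ℂ)).trace‖
      ≤ 2 ^ (Nat.gcd m (N+1)) := by
  have := abs_trace_le N 0 m (Nat.zero_le _) hm1 hm2 1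
    (fun σ τ => by by_cases hστ : σ = τ <;> simp [Matrix.one_apply, hστ])
    (fun σ hσ => by
      apply Matrix.one_apply_ne
      intro heq
      exact hσ fun i _ => by rw [← shift_iter N m σ i, heq])
  simpa using this
lemma gcd_le_half (N m : ℕ) (hm1 : 1 ≤ m) (hm2 : m ≤ N) :
    Nat.gcd m (N+1) ≤ (N+1)/2 := by
  have hdvd : Nat.gcd m (N+1) ∣ (N+1) := Nat.gcd_dvd_right _ _
  have hle : Nat.gcd m (N+1) ≤ m := Nat.le_of_dvd hm1 (Nat.gcd_dvd_left _ _)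
  obtain ⟨c, hc⟩ := hdvd
  have hc2 : 2 ≤ c := by
    rcases Nat.lt_or_ge c 2 with h2 | h2
    · interval_cases c <;> omega
    · exact h2
  have h4 : 2 * Nat.gcd m (N+1) ≤ N + 1 := by
    calc 2 * Nat.gcd m (N+1) ≤ c * Nat.gcd m (N+1) := Nat.mul_le_mul_right _ hc2
      _ = Nat.gcd m (N+1) * c := mul_comm _ _
      _ = N + 1 := hc.symm
  omega
lemma aux34 : ∀ L : ℕ, 4*(L-1)*2^(L/2) ≤ 3*2^L := by
  intro L
  induction L using Nat.strong_induction_on with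
  | _ L ih =>
    match L with
    | 0 => decide
    | 1 => decide
    | 2 => decide
    | 3 => decide
    | 4 => decide
    | (n+5) =>
      have h := ih (n+3) (by omega)
      have h2 : (n+5)/2 = (n+3)/2 + 1 := by omega
      have h3 : (2:ℕ)^(n+5) = 2^(n+3) * 4 := by
        rw [show n+5 = (n+3)+2 by omega, pow_add]
        norm_num
      rw [h2, h3, pow_succ]
      have h' : 4*(n+2)*2^((n+3)/2) ≤ 3*2^(n+3) := by
        have hx : n+3-1 = n+2 := by omega
        rwa [hx] at h
      have e1 : 8*(n+4) ≤ 16*(n+2) := by omega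
      calc 4*(n+5-1)*(2^((n+3)/2)*2) = 8*(n+4)*2^((n+3)/2) := by
            have hx : n+5-1 = n+4 := by omega
            rw [hx]; ring
        _ ≤ 16*(n+2)*2^((n+3)/2) := Nat.mul_le_mul_right _ e1
        _ = 4*(4*(n+2)*2^((n+3)/2)) := by ring
        _ ≤ 4*(3*2^(n+3)) := Nat.mul_le_mul_left _ h'
        _ = 3*(2^(n+3)*4) := by ring

/-- For a `q`-local observable `A = A_q ⊗ I_{L-q}` with `‖A‖ ≤ 1`, the normalised
trace of `A` in each momentum sector is close to the full normalised trace
`⟨A⟩ = tr A / 2^L`: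
`|tr(Π_k A Π_k)/tr Π_k − ⟨A⟩| = O(L / 2^{min{L-q, L/2}})`. -/
theorem trace_within_momentum_sector :
    ∃ C : ℝ, 0 < C ∧ ∀ L q : ℕ, 1 ≤ L → ∀ h : q ≤ L,
      ∀ Aq : Matrix (Fin q → Bool) (Fin q → Bool) ℂ,
        ‖Matrix.toEuclideanCLM (𝕜 := ℂ) (localOp L q h Aq)‖ ≤ 1 →
        ∀ k : ℕ, k < L →
          ‖(momentumProj L k * localOp L q h Aq * momentumProj L k).trace
              / (momentumProj L k).trace - (localOp L q h Aq).trace / 2 ^ L‖ ≤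
            C * L / (2 : ℝ) ^ min ((L : ℝ) - q) ((L : ℝ) / 2) := by
  refine ⟨8, by norm_num, ?_⟩
  intro L q hL h Aq hnorm k hk
  obtain ⟨N, rfl⟩ : ∃ N, L = N + 1 := ⟨L - 1, by omega⟩
  set A := localOp (N+1) q h Aq with hA
  set P := momentumProj (N+1) k with hPdef
  set c := cval N k with hc
  set Mx := max q ((N+1)/2) with hMx
  -- entry bounds
  have hent : ∀ σ τ, ‖A σ τ‖ ≤ 1 :=
    fun σ τ => (entry_abs_le A σ τ).trans hnorm
  have habsc : ∀ j : ℕ, ‖c ^ j‖ = 1 := by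
    intro j
    rw [norm_pow, hc, cval, show (2 * (Real.pi:ℝ) * Complex.I * (k:ℂ) / ((N:ℂ)+1))
      = ((2 * Real.pi * k / (N+1) : ℝ) : ℂ) * Complex.I by push_cast; ring,
      Complex.norm_exp_ofReal_mul_I, one_pow]
  have htA : ‖A.trace‖ ≤ 2 ^ (N+1) := by
    rw [Matrix.trace]
    calc ‖∑ σ, A.diag σ‖ ≤ ∑ σ, ‖A.diag σ‖ := norm_sum_le _ _
      _ ≤ ∑ _σ : Fin (N+1) → Bool, (1:ℝ) := Finset.sum_le_sum fun σ _ => hent σ σ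
      _ = 2 ^ (N+1) := by simp
  set w : ℂ := A.trace / 2 ^ (N+1) with hw
  have habsw : ‖w‖ ≤ 1 := by
    rw [hw, norm_div, norm_pow, Complex.norm_two, div_le_one (by positivity)]
    exact htA
  -- trace identities
  have hPA := trace_proj_mul N k A
  have hP1 := trace_proj_mul N k 1
  rw [mul_one] at hP1
  rw [← hPdef, ← hc] at hPA hP1
  set X : ℕ → ℂ := fun j => ((shiftOp (N+1))^(N+1-j) * A).trace with hX
  set Y : ℕ → ℂ := fun j => ((shiftOp (N+1))^(N+1-j) * 1).trace with hY
  have hX0 : X 0 = A.trace := by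
    rw [hX]
    simp only [Nat.sub_zero]
    rw [shiftOp_pow_full, one_mul]
  have hY0 : Y 0 = 2 ^ (N+1) := by
    rw [hY]
    simp only [Nat.sub_zero]
    rw [shiftOp_pow_full, one_mul, Matrix.trace_one]
    simp
  have hXb : ∀ j ∈ Finset.range (N+1), j ≠ 0 → ‖X j‖ ≤ 2 ^ Mx := by
    intro j hj hj0
    rw [Finset.mem_range] at hj
    have h1 : 1 ≤ N+1-j := by omega
    have h2 : N+1-j ≤ N := by omega
    refine le_trans (abs_trace_localOp_le N q (N+1-j) h h1 h2 Aq hent) ?_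
    have hle : max q (Nat.gcd (N+1-j) (N+1)) ≤ Mx :=
      max_le_max le_rfl (gcd_le_half N (N+1-j) h1 h2)
    exact_mod_cast Nat.cast_le.mpr (Nat.pow_le_pow_right (by norm_num) hle)
  have hYb : ∀ j ∈ Finset.range (N+1), j ≠ 0 → ‖Y j‖ ≤ 2 ^ ((N+1)/2) := by
    intro j hj hj0
    rw [Finset.mem_range] at hj
    have h1 : 1 ≤ N+1-j := by omega
    have h2 : N+1-j ≤ N := by omega
    refine le_trans (abs_trace_one_le N (N+1-j) h1 h2) ?_
    exact_mod_cast Nat.cast_le.mpr (Nat.pow_le_pow_right (by norm_num)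
      (gcd_le_half N (N+1-j) h1 h2))
  have hhalf_le : (2:ℝ) ^ ((N+1)/2) ≤ 2 ^ Mx :=
    pow_le_pow_right₀ one_le_two (le_max_right _ _)
  -- numerator bound
  have hnum : (P * A).trace - w * P.trace
      = ((N+1:ℕ):ℂ)⁻¹ * ∑ j ∈ Finset.range (N+1), (c^j * X j - w * (c^j * Y j)) := by
    have hsplit : ∑ j ∈ Finset.range (N+1), (c^j * X j - w * (c^j * Y j))
        = (∑ j ∈ Finset.range (N+1), c^j * X j)
          - w * ∑ j ∈ Finset.range (N+1), c^j * Y j := by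
      rw [Finset.sum_sub_distrib, Finset.mul_sum]
    rw [hPA, hP1, hsplit]
    ring
  have hterm : ∀ j ∈ Finset.range (N+1),
      ‖c^j * X j - w * (c^j * Y j)‖ ≤ 2 * 2 ^ Mx := by
    intro j hj
    by_cases hj0 : j = 0
    · subst hj0
      have hz : c^0 * X 0 - w * (c^0 * Y 0) = 0 := by
        rw [pow_zero, one_mul, one_mul, hX0, hY0, hw]
        have h2 : ((2:ℂ) ^ (N+1)) ≠ 0 := pow_ne_zero _ two_ne_zero
        field_simp
        ring
      rw [hz, norm_zero]
      positivity
    · have hsub : ‖c^j * X j - w * (c^j * Y j)‖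
          ≤ ‖c^j * X j‖ + ‖w * (c^j * Y j)‖ := by
        simpa [sub_eq_add_neg] using norm_add_le (c^j * X j) (-(w * (c^j * Y j)))
      refine hsub.trans ?_
      have e1 : ‖c^j * X j‖ ≤ 2 ^ Mx := by
        rw [norm_mul, habsc, one_mul]
        exact hXb j hj hj0
      have e2 : ‖w * (c^j * Y j)‖ ≤ 2 ^ Mx := by
        rw [norm_mul, norm_mul, habsc, one_mul]
        have hy := hYb j hj hj0
        have h0 : (0:ℝ) ≤ ‖Y j‖ := norm_nonneg _
        have h0w : (0:ℝ) ≤ ‖w‖ := norm_nonneg _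
        calc ‖w‖ * ‖Y j‖ ≤ 1 * (2 ^ ((N+1)/2)) := by
              nlinarith
          _ ≤ 2 ^ Mx := by rw [one_mul]; exact hhalf_le
      linarith
  have habsnum : ‖(P * A).trace - w * P.trace‖ ≤ 2 * 2 ^ Mx := by
    rw [hnum, norm_mul, norm_inv, Complex.norm_natCast]
    have hsum : ‖∑ j ∈ Finset.range (N+1), (c^j * X j - w * (c^j * Y j))‖
        ≤ (↑(N+1):ℝ) * (2 * 2 ^ Mx) := by
      refine le_trans (norm_sum_le _ _) (le_trans (Finset.sum_le_sum hterm) (le_of_eq ?_))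
      rw [Finset.sum_const, Finset.card_range, nsmul_eq_mul]
    have hNpos : (0:ℝ) < (↑(N+1):ℝ) := by positivity
    calc (↑(N+1):ℝ)⁻¹ * ‖∑ j ∈ Finset.range (N+1), (c^j * X j - w * (c^j * Y j))‖
        ≤ (↑(N+1):ℝ)⁻¹ * ((↑(N+1):ℝ) * (2 * 2 ^ Mx)) := by
          exact mul_le_mul_of_nonneg_left hsum (by positivity)
      _ = 2 * 2 ^ Mx := by field_simp
  -- denominator bound
  have hden : (2:ℝ)^(N+1) / (4*(↑(N+1):ℝ)) ≤ ‖P.trace‖ := by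
    have hmem : (0:ℕ) ∈ Finset.range (N+1) := Finset.mem_range.mpr (Nat.succ_pos N)
    have hsplit : ∑ j ∈ Finset.range (N+1), c^j * Y j
        = c^0 * Y 0 + ∑ j ∈ (Finset.range (N+1)).erase 0, c^j * Y j :=
      (Finset.add_sum_erase _ _ hmem).symm
    have hrest : ‖∑ j ∈ (Finset.range (N+1)).erase 0, c^j * Y j‖
        ≤ (N:ℝ) * 2^((N+1)/2) := by
      refine le_trans (norm_sum_le _ _) ?_
      have hb : ∀ j ∈ (Finset.range (N+1)).erase 0,
          ‖c^j * Y j‖ ≤ 2^((N+1)/2) := by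
        intro j hj
        obtain ⟨hj0, hjr⟩ := Finset.mem_erase.mp hj
        rw [norm_mul, habsc, one_mul]
        exact hYb j hjr hj0
      refine le_trans (Finset.sum_le_sum hb) (le_of_eq ?_)
      rw [Finset.sum_const, nsmul_eq_mul,
        Finset.card_erase_of_mem hmem, Finset.card_range]
      norm_num
    have h0 : ‖c^0 * Y 0‖ = 2^(N+1) := by
      rw [norm_mul, habsc, one_mul, hY0, norm_pow, Complex.norm_two]
    have hlow : (2:ℝ)^(N+1) - (N:ℝ) * 2^((N+1)/2)
        ≤ ‖∑ j ∈ Finset.range (N+1), c^j * Y j‖ := by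
      rw [hsplit]
      have htri := norm_add_le
        (c^0 * Y 0 + ∑ j ∈ (Finset.range (N+1)).erase 0, c^j * Y j)
        (-(∑ j ∈ (Finset.range (N+1)).erase 0, c^j * Y j))
      simp only [add_neg_cancel_right, norm_neg] at htri
      rw [h0] at htri
      linarith
    have haux : 4 * (N:ℝ) * 2^((N+1)/2) ≤ 3 * 2^(N+1) := by
      have h34 := aux34 (N+1)
      rw [show N+1-1 = N from rfl] at h34
      exact_mod_cast h34
    have habsP : ‖P.trace‖
        = ((↑(N+1):ℝ))⁻¹ * ‖∑ j ∈ Finset.range (N+1), c^j * Y j‖ := by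
      rw [hP1, norm_mul, norm_inv, Complex.norm_natCast]
    rw [habsP]
    have hNpos : (0:ℝ) < (↑(N+1):ℝ) := by positivity
    have hS : (2:ℝ)^(N+1)/4 ≤ ‖∑ j ∈ Finset.range (N+1), c^j * Y j‖ := by
      linarith
    calc (2:ℝ)^(N+1) / (4*(↑(N+1):ℝ)) = ((↑(N+1):ℝ))⁻¹ * ((2:ℝ)^(N+1)/4) := by
          field_simp
      _ ≤ _ := mul_le_mul_of_nonneg_left hS (by positivity)
  have hPpos : 0 < ‖P.trace‖ :=
    lt_of_lt_of_le (by positivity) hden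
  have hPne : P.trace ≠ 0 := by
    intro h0
    rw [h0, norm_zero] at hPpos
    exact lt_irrefl _ hPpos
  -- final combination
  have tPAP := trace_PAP N k A
  rw [← hPdef] at tPAP
  rw [tPAP]
  have hdiv : (P * A).trace / P.trace - w
      = ((P * A).trace - w * P.trace) / P.trace := by
    field_simp
  rw [hdiv, norm_div]
  have hmain : ‖(P*A).trace - w*P.trace‖ / ‖P.trace‖
      ≤ (2*2^Mx) / ((2:ℝ)^(N+1)/(4*(↑(N+1):ℝ))) :=
    div_le_div₀ (by positivity) habsnum (by positivity) hden
  refine hmain.trans ?_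
  -- exponent arithmetic
  have hminle : min ((↑(N+1):ℝ) - q) ((↑(N+1):ℝ)/2) ≤ (↑(N+1):ℝ) - (Mx:ℝ) := by
    rcases max_cases q ((N+1)/2) with ⟨he, _⟩ | ⟨he, _⟩
    · rw [hMx, he]
      exact min_le_left _ _
    · rw [hMx, he]
      refine min_le_of_right_le ?_
      have h2 : ((N+1)/2 : ℕ) * 2 ≤ N+1 := by omega
      have h2r : (((N+1)/2 : ℕ) : ℝ) * 2 ≤ (↑(N+1):ℝ) := by exact_mod_cast h2
      linarith
  have hexp : (2:ℝ) ^ (min ((↑(N+1):ℝ) - q) ((↑(N+1):ℝ)/2)) * 2 ^ Mx ≤ 2 ^ (N+1) := by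
    calc (2:ℝ) ^ (min ((↑(N+1):ℝ) - q) ((↑(N+1):ℝ)/2)) * 2 ^ Mx
        ≤ (2:ℝ) ^ ((↑(N+1):ℝ) - (Mx:ℝ)) * 2 ^ Mx := by
          exact mul_le_mul_of_nonneg_right
            (Real.rpow_le_rpow_of_exponent_le one_le_two hminle) (by positivity)
      _ = 2 ^ (N+1) := by
          rw [show ((2:ℝ) ^ Mx) = (2:ℝ) ^ ((Mx:ℕ):ℝ) from (Real.rpow_natCast 2 Mx).symm,
            ← Real.rpow_add two_pos, sub_add_cancel, Real.rpow_natCast]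
  have hrpos : (0:ℝ) < (2:ℝ) ^ (min ((↑(N+1):ℝ) - q) ((↑(N+1):ℝ)/2)) :=
    Real.rpow_pos_of_pos two_pos _
  rw [div_le_div_iff₀ (by positivity) hrpos]
  have hNpos : (0:ℝ) < (↑(N+1):ℝ) := by positivity
  have hrhs2 : (8:ℝ) * (↑(N+1):ℝ) * ((2:ℝ)^(N+1)/(4*(↑(N+1):ℝ))) = 2 * (2:ℝ)^(N+1) := by
    field_simp
    ring
  rw [hrhs2]
  nlinarith [hexp]
end

section
/- Let j be a nonzero element of the d-dimensional torus group T_L = Π_{s=1}^d Z/L_s Z with total size V = Π_s L_s, and let g(j) denote the order of j in T_L. Then the number of binary configurations s: T_L → {0,1} satisfying s(x) = s(x+j) for all x outside a rectangle R_q = Π_s {1,...,q_s} with q_s ≤ L_s/2 for all s, is at most 2^{|R_q| + V/g(j)}; moreover if d ≥ 2 this count is at most 2^{V/2}. -/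
open Finset

lemma card_val_interval (n lo hi : ℕ) [NeZero n] (hlo : 1 ≤ lo) (hhi : hi < n) :
    Fintype.card {v : ZMod n // lo ≤ v.val ∧ v.val ≤ hi} = hi + 1 - lo := by
  have e : {v : ZMod n // lo ≤ v.val ∧ v.val ≤ hi} ≃ Fin (hi + 1 - lo) :=
    { toFun := fun v => ⟨v.1.val - lo, by obtain ⟨h1, h2⟩ := v.2; omega⟩
      invFun := fun i => ⟨(((i : ℕ) + lo : ℕ) : ZMod n), by
        have hi2 := i.2
        have hlt : (i : ℕ) + lo < n := by omega
        rw [ZMod.val_natCast, Nat.mod_eq_of_lt hlt]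
        omega⟩
      left_inv := fun v => by
        obtain ⟨h1, h2⟩ := v.2
        apply Subtype.ext
        show (((v.1.val - lo) + lo : ℕ) : ZMod n) = v.1
        have hv : (v.1.val - lo) + lo = v.1.val := by omega
        rw [hv, ZMod.natCast_zmod_val]
      right_inv := fun i => by
        have hi2 := i.2
        have hlt : (i : ℕ) + lo < n := by omega
        apply Fin.ext
        show ((((i : ℕ) + lo : ℕ) : ZMod n)).val - lo = (i : ℕ)
        rw [ZMod.val_natCast, Nat.mod_eq_of_lt hlt]
        omega }
  rw [Fintype.card_congr e, Fintype.card_fin]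

lemma card_box {d : ℕ} (L : Fin d → ℕ) [∀ s, NeZero (L s)] (lo hi : Fin d → ℕ)
    (hlo : ∀ s, 1 ≤ lo s) (hhi : ∀ s, hi s < L s) :
    Fintype.card {x : ∀ s, ZMod (L s) // ∀ s, lo s ≤ (x s).val ∧ (x s).val ≤ hi s}
      = ∏ s, (hi s + 1 - lo s) := by
  rw [Fintype.card_congr
    (Equiv.subtypePiEquivPi (p := fun s (v : ZMod (L s)) => lo s ≤ v.val ∧ v.val ≤ hi s)),
    Fintype.card_pi]
  exact Finset.prod_congr rfl fun s _ => card_val_interval _ _ _ (hlo s) (hhi s)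

lemma comp_eq_of_shift {n g m : ℕ} [NeZero n] (hmn : g * m = n)
    {a b w : ZMod n} (ha1 : 1 ≤ a.val) (ha2 : a.val ≤ m) (hb1 : 1 ≤ b.val) (hb2 : b.val ≤ m)
    (hab : a = b + w) (hw : (g : ℤ) • w = 0) : a = b := by
  have hn : 0 < n := Nat.pos_of_ne_zero (NeZero.ne n)
  have hg : 0 < g := by
    rcases Nat.eq_zero_or_pos g with h | h
    · exfalso; rw [h, zero_mul] at hmn; omega
    · exact h
  have h1 : ((g * w.val : ℕ) : ZMod n) = 0 := by
    push_cast
    rw [ZMod.natCast_zmod_val]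
    rwa [zsmul_eq_mul, Int.cast_natCast] at hw
  have hdvd : n ∣ g * w.val := (ZMod.natCast_eq_zero_iff _ _).mp h1
  have hmw : m ∣ w.val := by
    rcases hdvd with ⟨c, hc⟩
    refine ⟨c, ?_⟩
    have : g * w.val = g * (m * c) := by rw [hc, ← hmn, mul_assoc]
    exact Nat.eq_of_mul_eq_mul_left hg this
  by_cases hw0 : w = 0
  · rw [hab, hw0, add_zero]
  · exfalso
    have hwv : w.val ≠ 0 := fun h => hw0 ((ZMod.val_eq_zero w).mp h)
    have hwlt : w.val < n := ZMod.val_lt w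
    have hm0 : 0 < m := by
      rcases Nat.eq_zero_or_pos m with h | h
      · exact absurd (by rcases hmw with ⟨c, hc⟩; rw [h] at hc; simpa using hc) hwv
      · exact h
    have h5 : m ≤ w.val := Nat.le_of_dvd (Nat.pos_of_ne_zero hwv) hmw
    have h6 : w.val ≤ n - m := by
      obtain ⟨c, hc⟩ := hmw
      obtain ⟨k, rfl⟩ : ∃ k, g = k + 1 := ⟨g - 1, by omega⟩
      have hck : c ≤ k := by
        by_contra hck
        have : m * (k + 1) ≤ m * c := Nat.mul_le_mul_left m (by omega)
        rw [← hc, mul_comm] at this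
        omega
      have hn2 : k * m + m = n := by rw [← hmn]; ring
      calc w.val = m * c := hc
        _ ≤ m * k := Nat.mul_le_mul_left m hck
        _ = k * m := mul_comm m k
        _ ≤ n - m := by omega
    have hval : a.val = (b.val + w.val) % n := by rw [hab, ZMod.val_add]
    rcases Nat.lt_or_ge (b.val + w.val) n with h | h
    · rw [Nat.mod_eq_of_lt h] at hval
      omega
    · have hsum : b.val + w.val = n := by omega
      rw [hsum, Nat.mod_self] at hval
      omega
set_option maxHeartbeats 1000000 in
/-- Let `j ≠ 0` in the `d`-dimensional torus group `T_L = Π_s Z/L_s Z` of volume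
`V = Π_s L_s`, with order `g(j) = addOrderOf j`. The number of binary
configurations `s : T_L → Bool` satisfying `s(x) = s(x+j)` for all `x` outside
the rectangle `R_q = Π_s {1,…,q_s}` (with `q_s ≤ L_s/2` for all `s`) is at most
`2^{|R_q| + V/g(j)}`; moreover if `d ≥ 2` this count is at most `2^{V/2}`. -/
theorem torus_shift_constraint_count (d : ℕ) (L q : Fin d → ℕ)
    (hL : ∀ s, 1 ≤ L s) (hq : ∀ s, 2 * q s ≤ L s)
    (j : ∀ s, ZMod (L s)) (hj : j ≠ 0) :
    Nat.card {f : (∀ s, ZMod (L s)) → Bool //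
        ∀ x : ∀ s, ZMod (L s), (¬ ∀ s, 1 ≤ (x s).val ∧ (x s).val ≤ q s) →
          f x = f (x + j)} ≤
      2 ^ ((∏ s, q s) + (∏ s, L s) / addOrderOf j) ∧
    (2 ≤ d →
      ((Nat.card {f : (∀ s, ZMod (L s)) → Bool //
          ∀ x : ∀ s, ZMod (L s), (¬ ∀ s, 1 ≤ (x s).val ∧ (x s).val ≤ q s) →
            f x = f (x + j)} : ℝ) ≤ (2 : ℝ) ^ (((∏ s, L s : ℕ) : ℝ) / 2))) := by
  classical
  haveI : ∀ s, NeZero (L s) := fun s => ⟨Nat.one_le_iff_ne_zero.mp (hL s)⟩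
  haveI hdeq : DecidableEq (∀ s, ZMod (L s)) := Classical.decEq _
  set g : ℕ := addOrderOf j with hgdef
  have hg1 : 0 < g := addOrderOf_pos j
  have hg2 : 2 ≤ g := by
    rcases Nat.lt_or_ge g 2 with h | h
    · exfalso
      have h1 : g = 1 := by omega
      exact hj (AddMonoid.addOrderOf_eq_one_iff.mp h1)
    · exact h
  have hq_lt : ∀ s, q s < L s := fun s => by have h1 := hq s; have h2 := hL s; omega
  set R : Finset (∀ s, ZMod (L s)) :=
    Finset.univ.filter (fun x => ∀ s, 1 ≤ (x s).val ∧ (x s).val ≤ q s) with hRdef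
  have hRcard : R.card = ∏ s, q s := by
    rw [hRdef, ← Fintype.card_subtype,
      card_box L (fun _ => 1) q (fun _ => le_refl 1) hq_lt]
    exact Finset.prod_congr rfl fun s _ => by omega
  set H : AddSubgroup (∀ s, ZMod (L s)) := AddSubgroup.zmultiples j with hHdef
  haveI : Fintype ((∀ s, ZMod (L s)) ⧸ H) := Fintype.ofFinite _
  haveI hdeqQ : DecidableEq ((∀ s, ZMod (L s)) ⧸ H) := Classical.decEq _
  set π : (∀ s, ZMod (L s)) → (∀ s, ZMod (L s)) ⧸ H := QuotientAddGroup.mk with hπ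
  set C : Finset ((∀ s, ZMod (L s)) ⧸ H) := R.image π with hCdef
  set Sf : Finset (∀ s, ZMod (L s)) := (Finset.univ \ C).image Quotient.out with hSfdef
  have hQg : Fintype.card ((∀ s, ZMod (L s)) ⧸ H) * g = ∏ s, L s := by
    have h1 := AddSubgroup.card_eq_card_quotient_mul_card_addSubgroup H
    have h2 : Nat.card H = g := Nat.card_zmultiples j
    have h3 : Nat.card (∀ s, ZMod (L s)) = ∏ s, L s := by
      rw [Nat.card_pi]
      exact Finset.prod_congr rfl fun s _ => Nat.card_zmod (L s)
    rw [h2, h3, Nat.card_eq_fintype_card] at h1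
    omega
  have hgj0 : (g : ℤ) • j = 0 := by
    rw [natCast_zsmul]
    exact addOrderOf_nsmul_eq_zero j
  have hz2n : ∀ z : ℤ, ∃ k : ℕ, (k : ℕ) • j = z • j := by
    intro z
    refine ⟨(z % (g : ℤ)).toNat, ?_⟩
    have ht : ((z % (g : ℤ)).toNat : ℤ) = z % (g : ℤ) :=
      Int.toNat_of_nonneg (Int.emod_nonneg z (by exact_mod_cast hg1.ne'))
    calc ((z % (g : ℤ)).toNat : ℕ) • j = ((z % (g : ℤ)).toNat : ℤ) • j :=
          (natCast_zsmul j _).symm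
      _ = (z % (g : ℤ)) • j := by rw [ht]
      _ = (z % (g : ℤ)) • j + (z / (g : ℤ)) • ((g : ℤ) • j) := by
          rw [hgj0, smul_zero, add_zero]
      _ = (z % (g : ℤ) + (z / (g : ℤ)) * (g : ℤ)) • j := by rw [add_zsmul, mul_smul]
      _ = z • j := by rw [Int.emod_add_ediv_mul z (g : ℤ)]
  have key : ∀ x, ∃ k : ℕ, x + (k : ℕ) • j ∈ R ∪ Sf := by
    intro x
    by_cases hc : π x ∈ C
    · obtain ⟨r, hrR, hr⟩ := Finset.mem_image.mp hc
      have hmem : -x + r ∈ H := (QuotientAddGroup.eq).mp hr.symm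
      obtain ⟨z, hz⟩ := AddSubgroup.mem_zmultiples_iff.mp hmem
      obtain ⟨k, hk⟩ := hz2n z
      refine ⟨k, Finset.mem_union_left _ ?_⟩
      have hxr : x + (k : ℕ) • j = r := by rw [hk, hz]; abel
      rwa [hxr]
    · have hyS : Quotient.out (π x) ∈ Sf :=
        Finset.mem_image.mpr ⟨π x, Finset.mem_sdiff.mpr ⟨Finset.mem_univ _, hc⟩, rfl⟩
      have hπy : π (Quotient.out (π x)) = π x := QuotientAddGroup.out_eq' (π x)
      have hmem : -x + Quotient.out (π x) ∈ H := (QuotientAddGroup.eq).mp hπy.symm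
      obtain ⟨z, hz⟩ := AddSubgroup.mem_zmultiples_iff.mp hmem
      obtain ⟨k, hk⟩ := hz2n z
      refine ⟨k, Finset.mem_union_right _ ?_⟩
      have hxy : x + (k : ℕ) • j = Quotient.out (π x) := by rw [hk, hz]; abel
      rwa [hxy]
  have hcard_le : Nat.card {f : (∀ s, ZMod (L s)) → Bool //
        ∀ x : ∀ s, ZMod (L s), (¬ ∀ s, 1 ≤ (x s).val ∧ (x s).val ≤ q s) →
          f x = f (x + j)} ≤ 2 ^ (R ∪ Sf).card := by
    have hinj : Function.Injective
        (fun (f : {f : (∀ s, ZMod (L s)) → Bool //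
            ∀ x : ∀ s, ZMod (L s), (¬ ∀ s, 1 ≤ (x s).val ∧ (x s).val ≤ q s) →
              f x = f (x + j)}) (y : {z // z ∈ R ∪ Sf}) => f.1 y.1) := by
      intro f f' hff'
      have hagree : ∀ z, z ∈ R ∪ Sf → f.1 z = f'.1 z := fun z hz => congrFun hff' ⟨z, hz⟩
      have main : ∀ (k : ℕ) (x), x + (k : ℕ) • j ∈ R ∪ Sf → f.1 x = f'.1 x := by
        intro k
        induction k with
        | zero => intro x hx; exact hagree x (by simpa using hx)
        | succ k ih =>
          intro x hx
          by_cases hxR : ∀ s, 1 ≤ (x s).val ∧ (x s).val ≤ q s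
          · exact hagree x (Finset.mem_union_left _
              (by rw [hRdef]; exact Finset.mem_filter.mpr ⟨Finset.mem_univ _, hxR⟩))
          · rw [f.2 x hxR, f'.2 x hxR]
            apply ih (x + j)
            have hstep : x + j + (k : ℕ) • j = x + ((k + 1 : ℕ) : ℕ) • j := by
              rw [succ_nsmul]; abel
            rwa [hstep]
      apply Subtype.ext
      funext x
      obtain ⟨k, hk⟩ := key x
      exact main k x hk
    calc Nat.card {f : (∀ s, ZMod (L s)) → Bool //
        ∀ x : ∀ s, ZMod (L s), (¬ ∀ s, 1 ≤ (x s).val ∧ (x s).val ≤ q s) →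
          f x = f (x + j)}
        ≤ Nat.card ({z // z ∈ R ∪ Sf} → Bool) := Nat.card_le_card_of_injective _ hinj
      _ = 2 ^ (R ∪ Sf).card := by
          rw [Nat.card_eq_fintype_card, Fintype.card_fun, Fintype.card_bool, Fintype.card_coe]
  set N : ℕ := Nat.card {f : (∀ s, ZMod (L s)) → Bool //
        ∀ x : ∀ s, ZMod (L s), (¬ ∀ s, 1 ≤ (x s).val ∧ (x s).val ≤ q s) →
          f x = f (x + j)} with hN
  clear_value N
  clear hN
  have hCsub : C.card ≤ Fintype.card ((∀ s, ZMod (L s)) ⧸ H) := by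
    simpa using Finset.card_le_univ C
  have hSfcard : Sf.card ≤ Fintype.card ((∀ s, ZMod (L s)) ⧸ H) - C.card := by
    calc Sf.card ≤ (Finset.univ \ C).card := Finset.card_image_le
      _ = _ := by rw [Finset.card_sdiff_of_subset (Finset.subset_univ C), Finset.card_univ]
  have hRS : (R ∪ Sf).card ≤ R.card + Sf.card := Finset.card_union_le _ _
  constructor
  · refine le_trans hcard_le (Nat.pow_le_pow_right (by norm_num) ?_)
    have hdiv : (∏ s, L s) / g = Fintype.card ((∀ s, ZMod (L s)) ⧸ H) :=
      Nat.div_eq_of_eq_mul_left hg1 hQg.symm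
    calc (R ∪ Sf).card ≤ R.card + Sf.card := hRS
      _ ≤ (∏ s, q s) + (∏ s, L s) / g := by rw [hRcard, hdiv]; omega
  · intro hd
    set V : ℕ := ∏ s, L s with hVdef
    have hV1 : 1 ≤ V := Finset.one_le_prod' fun s _ => hL s
    suffices hexp : ((R ∪ Sf).card : ℝ) ≤ (V : ℝ) / 2 by
      calc (N : ℝ)
          ≤ ((2 ^ (R ∪ Sf).card : ℕ) : ℝ) := by exact_mod_cast hcard_le
        _ = (2 : ℝ) ^ ((R ∪ Sf).card : ℕ) := by push_cast; ring
        _ = (2 : ℝ) ^ (((R ∪ Sf).card : ℕ) : ℝ) := (Real.rpow_natCast 2 _).symm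
        _ ≤ (2 : ℝ) ^ ((V : ℝ) / 2) :=
            Real.rpow_le_rpow_of_exponent_le (by norm_num) hexp
    have hQV : (Fintype.card ((∀ s, ZMod (L s)) ⧸ H) : ℝ) * (g : ℝ) = (V : ℝ) := by
      exact_mod_cast hQg
    have hcast1 : ((R ∪ Sf).card : ℝ) ≤
        (R.card : ℝ) + ((Fintype.card ((∀ s, ZMod (L s)) ⧸ H) : ℝ) - (C.card : ℝ)) := by
      have h0 : (R ∪ Sf).card ≤ R.card + (Fintype.card ((∀ s, ZMod (L s)) ⧸ H) - C.card) := by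
        omega
      have := (Nat.cast_le (α := ℝ)).mpr h0
      rw [Nat.cast_add, Nat.cast_sub hCsub] at this
      linarith
    have hgpos : (0 : ℝ) < (g : ℝ) := by exact_mod_cast hg1
    by_cases hg4 : 4 ≤ g
    · -- g ≥ 4
      have hRreal : (R.card : ℝ) ≤ (V : ℝ) / 4 := by
        rw [hRcard]
        have h1 : ((∏ s, q s : ℕ) : ℝ) = ∏ s, (q s : ℝ) := by push_cast; ring
        have h2 : ∏ s, (q s : ℝ) ≤ ∏ s, ((L s : ℝ) / 2) := by
          apply Finset.prod_le_prod
          · intro s _; positivity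
          · intro s _
            have := hq s
            have : (2 : ℝ) * (q s : ℝ) ≤ (L s : ℝ) := by exact_mod_cast this
            linarith
        have h3 : ∏ s, ((L s : ℝ) / 2) = (V : ℝ) / 2 ^ d := by
          have hcast : ((V : ℕ) : ℝ) = ∏ s, (L s : ℝ) := by rw [hVdef]; push_cast; ring
          rw [Finset.prod_div_distrib, Finset.prod_const, Finset.card_univ,
            Fintype.card_fin, hcast]
        have h4 : (4 : ℝ) ≤ 2 ^ d := by
          calc (4 : ℝ) = 2 ^ 2 := by norm_num
            _ ≤ 2 ^ d := by
                apply pow_le_pow_right₀ (by norm_num) hd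
        have hV0 : (0 : ℝ) ≤ (V : ℝ) := by positivity
        have h5 : (V : ℝ) / 2 ^ d ≤ (V : ℝ) / 4 := by
          apply div_le_div_of_nonneg_left hV0 (by norm_num) h4
        calc ((∏ s, q s : ℕ) : ℝ) = ∏ s, (q s : ℝ) := h1
          _ ≤ ∏ s, ((L s : ℝ) / 2) := h2
          _ = (V : ℝ) / 2 ^ d := h3
          _ ≤ (V : ℝ) / 4 := h5
      have hQreal : (Fintype.card ((∀ s, ZMod (L s)) ⧸ H) : ℝ) ≤ (V : ℝ) / 4 := by
        have : (Fintype.card ((∀ s, ZMod (L s)) ⧸ H) : ℝ) = (V : ℝ) / (g : ℝ) := by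
          field_simp at hQV ⊢
          linarith [hQV]
        rw [this]
        apply div_le_div_of_nonneg_left (by positivity) (by norm_num)
        exact_mod_cast hg4
      have hC0 : (0 : ℝ) ≤ (C.card : ℝ) := by positivity
      linarith
    · -- g = 2 or 3
      have hg23 : g = 2 ∨ g = 3 := by omega
      obtain ⟨t, hjt⟩ := Function.ne_iff.mp hj
      have hordt : addOrderOf (j t) = g := by
        have hdvd : addOrderOf (j t) ∣ g := by
          apply addOrderOf_dvd_of_nsmul_eq_zero
          have h0 : g • j = 0 := addOrderOf_nsmul_eq_zero j
          calc g • (j t) = (g • j) t := rfl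
            _ = 0 := by rw [h0]; rfl
        have hne1 : addOrderOf (j t) ≠ 1 := fun h =>
          hjt (AddMonoid.addOrderOf_eq_one_iff.mp h)
        have hp : Nat.Prime g := by
          rcases hg23 with h | h
          · rw [h]; exact Nat.prime_two
          · rw [h]; exact Nat.prime_three
        rcases hp.eq_one_or_self_of_dvd _ hdvd with h | h
        · exact absurd h hne1
        · exact h
      have hgLt : g ∣ L t := by
        rw [← hordt]
        have h := addOrderOf_dvd_card (x := j t)
        rwa [ZMod.card] at h
      set m : ℕ := L t / g with hm
      have hmg : g * m = L t := Nat.mul_div_cancel' hgLt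
      have hm1 : 1 ≤ m := by
        rcases Nat.eq_zero_or_pos m with h | h
        · exfalso; rw [h, mul_zero] at hmg; have := hL t; omega
        · exact h
      set RA : Finset (∀ s, ZMod (L s)) := R.filter (fun x => (x t).val ≤ m) with hRAdef
      have hRAC : RA.card ≤ C.card := by
        apply Finset.card_le_card_of_injOn π
        · intro a ha
          exact Finset.mem_image_of_mem π (Finset.mem_of_mem_filter a ha)
        · intro x hx y hy hxy
          have hx' : x ∈ RA := hx
          have hy' : y ∈ RA := hy
          obtain ⟨hxR, hxm⟩ := Finset.mem_filter.mp hx'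
          obtain ⟨hyR, hym⟩ := Finset.mem_filter.mp hy'
          have hxP : ∀ s, 1 ≤ (x s).val ∧ (x s).val ≤ q s := (Finset.mem_filter.mp hxR).2
          have hyP : ∀ s, 1 ≤ (y s).val ∧ (y s).val ≤ q s := (Finset.mem_filter.mp hyR).2
          have hmem : -x + y ∈ H := (QuotientAddGroup.eq).mp hxy
          obtain ⟨z, hz⟩ := AddSubgroup.mem_zmultiples_iff.mp hmem
          have hyx : x + z • j = y := by rw [hz]; abel
          have hcomp : y t = x t + z • (j t) := by
            rw [← hyx]; simp
          have hgjt : (g : ℤ) • (j t) = 0 := by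
            rw [natCast_zsmul, ← hordt]
            exact addOrderOf_nsmul_eq_zero (j t)
          have hwsmul : (g : ℤ) • (z • (j t)) = 0 := by
            rw [smul_comm, hgjt, smul_zero]
          have hyt : y t = x t :=
            comp_eq_of_shift hmg (hyP t).1 hym (hxP t).1 hxm hcomp hwsmul
          have hz0 : z • (j t) = 0 := by
            have h := hcomp
            rw [hyt] at h
            exact (left_eq_add.mp h)
          have hzdvd : (g : ℤ) ∣ z := by
            have h := addOrderOf_dvd_iff_zsmul_eq_zero.mpr hz0
            rwa [hordt] at h
          obtain ⟨c, rfl⟩ := hzdvd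
          have hzj : ((g : ℤ) * c) • j = 0 := by
            rw [mul_comm, mul_smul, hgj0, smul_zero]
          rw [hzj, add_zero] at hyx
          exact hyx
      have hQreal : (Fintype.card ((∀ s, ZMod (L s)) ⧸ H) : ℝ) = (V : ℝ) / (g : ℝ) := by
        field_simp
        linarith [hQV]
      rcases hg23 with hg2' | hg3'
      · -- g = 2 : RA = R
        have hqtm : q t ≤ m := by
          rw [hm, hg2']
          exact (Nat.le_div_iff_mul_le (by norm_num)).mpr (by have := hq t; omega)
        have hRA_eq : RA = R := by
          rw [hRAdef]
          apply Finset.filter_true_of_mem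
          intro x hx
          have hxP : ∀ s, 1 ≤ (x s).val ∧ (x s).val ≤ q s := (Finset.mem_filter.mp hx).2
          exact le_trans (hxP t).2 hqtm
        have hRC : (R.card : ℝ) ≤ (C.card : ℝ) := by
          have h0 : R.card ≤ C.card := by rw [← hRA_eq]; exact hRAC
          exact_mod_cast h0
        rw [hQreal, hg2'] at hcast1
        push_cast at hcast1
        linarith
      · -- g = 3
        have hdiffbox : R \ RA =
            Finset.univ.filter (fun x => ∀ s,
              (if s = t then m + 1 else 1) ≤ (x s).val ∧ (x s).val ≤ q s) := by
          ext x
          simp only [Finset.mem_sdiff, hRAdef, hRdef, Finset.mem_filter, Finset.mem_univ,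
            true_and, not_and, not_le]
          constructor
          · rintro ⟨hxP, hnot⟩
            have hmlt := hnot hxP
            intro s
            by_cases hst : s = t
            · subst hst
              rw [if_pos rfl]
              exact ⟨by omega, (hxP s).2⟩
            · rw [if_neg hst]
              exact hxP s
          · intro hall
            constructor
            · intro s
              rcases hall s with ⟨h1, h2⟩
              refine ⟨?_, h2⟩
              by_cases hst : s = t
              · subst hst; rw [if_pos rfl] at h1; omega
              · rwa [if_neg hst] at h1
            · intro _
              have := (hall t).1
              rw [if_pos rfl] at this
              omega
        have hdiffcard : (R \ RA).card =
            (q t + 1 - (m + 1)) * ∏ s ∈ Finset.univ.erase t, q s := by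
          rw [hdiffbox, ← Fintype.card_subtype,
            card_box L (fun s => if s = t then m + 1 else 1) q
              (fun s => by show 1 ≤ if s = t then m + 1 else 1; split <;> omega) hq_lt,
            ← Finset.mul_prod_erase Finset.univ _ (Finset.mem_univ t)]
          rw [if_pos rfl]
          congr 1
          exact Finset.prod_congr rfl fun s hs => by
            rw [if_neg (Finset.ne_of_mem_erase hs)]; omega
        have hRsplit : (R \ RA).card + RA.card = R.card :=
          Finset.card_sdiff_add_card_eq_card (Finset.filter_subset _ _)
        have hdiffV : ((R \ RA).card : ℝ) ≤ (V : ℝ) / 6 := by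
          rw [hdiffcard]
          by_cases hqm : q t ≤ m
          · have hz : q t + 1 - (m + 1) = 0 := by omega
            rw [hz, zero_mul]
            simp only [Nat.cast_zero]
            positivity
          · push_neg at hqm
            have h1 : ((q t + 1 - (m + 1) : ℕ) : ℝ) = (q t : ℝ) - (m : ℝ) := by
              have : q t + 1 - (m + 1) = q t - m := by omega
              rw [this, Nat.cast_sub (by omega)]
            have hm3 : (m : ℝ) = (L t : ℝ) / 3 := by
              have : (3 : ℝ) * (m : ℝ) = (L t : ℝ) := by
                exact_mod_cast (hg3' ▸ hmg)
              linarith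
            have hqhalf : (q t : ℝ) ≤ (L t : ℝ) / 2 := by
              have := hq t
              have h2 : (2 : ℝ) * (q t : ℝ) ≤ (L t : ℝ) := by exact_mod_cast this
              linarith
            have h2 : ((q t + 1 - (m + 1) : ℕ) : ℝ) ≤ (L t : ℝ) / 6 := by
              rw [h1, hm3]; linarith
            have h3 : ((∏ s ∈ Finset.univ.erase t, q s : ℕ) : ℝ) ≤
                ∏ s ∈ Finset.univ.erase t, (L s : ℝ) := by
              push_cast
              apply Finset.prod_le_prod
              · intro s _; positivity
              · intro s _; exact_mod_cast (hq_lt s).le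
            have h4 : (L t : ℝ) * ∏ s ∈ Finset.univ.erase t, (L s : ℝ) = (V : ℝ) := by
              rw [hVdef]
              push_cast
              exact Finset.mul_prod_erase Finset.univ (fun s => ((L s : ℕ) : ℝ))
                (Finset.mem_univ t)
            have hLt0 : (0 : ℝ) < (L t : ℝ) := by exact_mod_cast hL t
            have h5 : (0 : ℝ) ≤ ∏ s ∈ Finset.univ.erase t, (L s : ℝ) := by positivity
            rw [Nat.cast_mul]
            calc ((q t + 1 - (m + 1) : ℕ) : ℝ) * ((∏ s ∈ Finset.univ.erase t, q s : ℕ) : ℝ)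
                ≤ ((L t : ℝ) / 6) * ∏ s ∈ Finset.univ.erase t, (L s : ℝ) :=
                  mul_le_mul h2 h3 (by positivity) (by positivity)
              _ = (V : ℝ) / 6 := by rw [← h4]; ring
        clear hdiffbox key hz2n hgj0 hcard_le
        have hRACr : (R.card : ℝ) - (C.card : ℝ) ≤ ((R \ RA).card : ℝ) := by
          have h0 : (RA.card : ℝ) ≤ (C.card : ℝ) := Nat.cast_le.mpr hRAC
          have h1 : ((R \ RA).card : ℝ) + (RA.card : ℝ) = (R.card : ℝ) := by
            rw [← Nat.cast_add]
            exact congrArg _ hRsplit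
          linarith
        rw [hQreal, hg3'] at hcast1
        push_cast at hcast1
        linarith
end
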